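/- Let u_k ∈ V_k for k = 0, 1, …, N. Then ‖∑_{k=0}^N u_k‖_a² ≤ 2(1 + ρ(ℰ)) ∑_{k=0}^N ‖u_k‖_a², where ρ(ℰ) is the spectral radius of the N×N symmetric matrix ℰ = (ε_{kl}). -/

import Mathlib

open scoped RealInnerProductSpace

/-- For `u_k ∈ V_k`, `k = 0,…,N`, one has
`‖∑ u_k‖² ≤ 2 (1 + ρ(ℰ)) ∑ ‖u_k‖²`, where `ρ(ℰ)` is the spectral radius of the symmetric
matrix `ℰ = (ε_{kl})_{k,l=1}^N` of strengthened Cauchy–Schwarz constants for `V_1,…,V_N`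
(for a symmetric matrix, the spectral radius equals the Euclidean operator norm). -/
theorem stmt2 {V : Type*} [NormedAddCommGroup V] [InnerProductSpace ℝ V]
    (N : ℕ) (Vs : Fin (N + 1) → Submodule ℝ V)
    (ε : Matrix (Fin N) (Fin N) ℝ) (hεsymm : ε.IsSymm) (hεnonneg : ∀ k l, 0 ≤ ε k l)
    (hCS : ∀ k l : Fin N, ∀ v ∈ Vs k.succ, ∀ w ∈ Vs l.succ,
      ⟪v, w⟫ ≤ ε k l * ‖v‖ * ‖w‖)
    (u : Fin (N + 1) → V) (hu : ∀ k, u k ∈ Vs k) :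
    ‖∑ k, u k‖ ^ 2 ≤
      2 * (1 + ‖Matrix.toEuclideanCLM (𝕜 := ℝ) ε‖) * ∑ k, ‖u k‖ ^ 2 := by
  set A := Matrix.toEuclideanCLM (𝕜 := ℝ) ε with hA
  set x : EuclideanSpace ℝ (Fin N) := (WithLp.equiv 2 _).symm (fun k => ‖u k.succ‖) with hx
  set S : V := ∑ k : Fin N, u k.succ with hS
  -- bound on ‖S‖²
  have hS2 : ‖S‖ ^ 2 ≤ ‖A‖ * ∑ k : Fin N, ‖u k.succ‖ ^ 2 := by
    have h1 : ‖S‖ ^ 2 = ∑ k : Fin N, ∑ l : Fin N, ⟪u k.succ, u l.succ⟫ := by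
      rw [← real_inner_self_eq_norm_sq, hS, sum_inner]
      exact Finset.sum_congr rfl fun k _ => by rw [inner_sum]
    have h2 : ∑ k : Fin N, ∑ l : Fin N, ⟪u k.succ, u l.succ⟫ ≤
        ∑ k : Fin N, ∑ l : Fin N, ε k l * ‖u k.succ‖ * ‖u l.succ‖ := by
      refine Finset.sum_le_sum fun k _ => Finset.sum_le_sum fun l _ => ?_
      exact hCS k l _ (hu k.succ) _ (hu l.succ)
    have h3 : ∑ k : Fin N, ∑ l : Fin N, ε k l * ‖u k.succ‖ * ‖u l.succ‖ = ⟪A x, x⟫ := by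
      rw [hA, hx, PiLp.inner_apply]
      simp only [WithLp.equiv_symm_apply, Matrix.toEuclideanCLM_toLp, WithLp.ofLp_toLp,
        RCLike.inner_apply, starRingEnd_apply, star_trivial, Matrix.toLin'_apply,
        Matrix.mulVec, dotProduct, Finset.sum_mul, Finset.mul_sum]
      rw [Finset.sum_comm]
      exact Finset.sum_congr rfl fun k _ => Finset.sum_congr rfl fun l _ => by
        rw [hεsymm.apply]; ring
    have h4 : ⟪A x, x⟫ ≤ ‖A‖ * ‖x‖ * ‖x‖ := by
      calc ⟪A x, x⟫ ≤ ‖A x‖ * ‖x‖ := real_inner_le_norm _ _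
        _ ≤ ‖A‖ * ‖x‖ * ‖x‖ :=
          mul_le_mul_of_nonneg_right (A.le_opNorm x) (norm_nonneg x)
    have h5 : ‖x‖ * ‖x‖ = ∑ k : Fin N, ‖u k.succ‖ ^ 2 := by
      rw [← real_inner_self_eq_norm_mul_norm, hx, PiLp.inner_apply]
      simp [pow_two]
    calc ‖S‖ ^ 2 ≤ ⟪A x, x⟫ := by rw [h1]; exact h2.trans h3.le
      _ ≤ ‖A‖ * (‖x‖ * ‖x‖) := by linarith [h4]
      _ = ‖A‖ * ∑ k : Fin N, ‖u k.succ‖ ^ 2 := by rw [h5]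
  have hsplit : (∑ k, u k) = u 0 + S := by rw [hS, Fin.sum_univ_succ]
  have hAnn : (0:ℝ) ≤ ‖A‖ := norm_nonneg _
  have hterm : ∑ k, ‖u k‖ ^ 2 = ‖u 0‖ ^ 2 + ∑ k : Fin N, ‖u k.succ‖ ^ 2 :=
    Fin.sum_univ_succ _
  have htri : ‖u 0 + S‖ ≤ ‖u 0‖ + ‖S‖ := norm_add_le _ _
  have hsq : ‖u 0 + S‖ ^ 2 ≤ 2 * ‖u 0‖ ^ 2 + 2 * ‖S‖ ^ 2 := by
    nlinarith [htri, sq_nonneg (‖u 0‖ - ‖S‖), norm_nonneg (u 0 + S), norm_nonneg (u 0), norm_nonneg S,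
      mul_self_le_mul_self (norm_nonneg (u 0 + S)) htri]
  have h0 : ‖u 0‖ ^ 2 ≤ ∑ k, ‖u k‖ ^ 2 := by
    rw [hterm]
    have : (0:ℝ) ≤ ∑ k : Fin N, ‖u k.succ‖ ^ 2 :=
      Finset.sum_nonneg fun k _ => sq_nonneg _
    linarith
  have hrest : (0:ℝ) ≤ ∑ k : Fin N, ‖u k.succ‖ ^ 2 :=
    Finset.sum_nonneg fun k _ => sq_nonneg _
  rw [hsplit]
  nlinarith [hS2, hsq, h0, hterm]
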